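/- Let Σ and Σ* be m×m symmetric positive definite real matrices, and set a = ‖Σ*^{-1/2}(Σ − Σ*)Σ*^{-1/2}‖_F and b = ‖Σ^{-1/2}(Σ* − Σ)Σ^{-1/2}‖_F. If a < 1, then a/(1+a) ≤ b ≤ a/(1−a). -/

import Mathlib

open Matrix

/-- Squared Frobenius norm of a real matrix. -/
noncomputable def frobSq {m n : ℕ} (A : Matrix (Fin m) (Fin n) ℝ) : ℝ :=
  Matrix.trace (Aᵀ * A)

/-- Frobenius norm of a real matrix. -/
noncomputable def frob {m n : ℕ} (A : Matrix (Fin m) (Fin n) ℝ) : ℝ :=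
  Real.sqrt (frobSq A)

section
open scoped ComplexOrder

/-- The positive semidefinite square root of a positive semidefinite matrix
(Mathlib's former `Matrix.PosSemidef.sqrt`, removed since; restored with its old definition). -/
noncomputable def Matrix.PosSemidef.sqrt {n 𝕜 : Type*} [Fintype n] [RCLike 𝕜] [DecidableEq n]
    {A : Matrix n n 𝕜} (hA : A.PosSemidef) : Matrix n n 𝕜 :=
  hA.1.eigenvectorUnitary.1 * diagonal ((↑) ∘ Real.sqrt ∘ hA.1.eigenvalues) *
    (star hA.1.eigenvectorUnitary : Matrix n n 𝕜)
end

section sqrtlemmas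
open scoped ComplexOrder

lemma Matrix.PosSemidef.sqrt_mul_self {n 𝕜 : Type*} [Fintype n] [RCLike 𝕜] [DecidableEq n]
    {A : Matrix n n 𝕜} (hA : A.PosSemidef) : hA.sqrt * hA.sqrt = A := by
  have hU : star (hA.1.eigenvectorUnitary : Matrix n n 𝕜) * hA.1.eigenvectorUnitary = 1 :=
    (Unitary.mem_iff.mp hA.1.eigenvectorUnitary.2).1
  unfold Matrix.PosSemidef.sqrt
  conv_rhs => rw [hA.1.spectral_theorem, Unitary.conjStarAlgAut_apply]
  simp only [mul_assoc]
  rw [← mul_assoc (star (hA.1.eigenvectorUnitary : Matrix n n 𝕜)), hU, one_mul,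
    ← mul_assoc (diagonal _) (diagonal _), diagonal_mul_diagonal]
  congr 3
  funext i
  simp only [Function.comp_apply]
  rw [← RCLike.ofReal_mul, Real.mul_self_sqrt (hA.eigenvalues_nonneg i)]

lemma Matrix.PosSemidef.posSemidef_sqrt {n 𝕜 : Type*} [Fintype n] [RCLike 𝕜] [DecidableEq n]
    {A : Matrix n n 𝕜} (hA : A.PosSemidef) : hA.sqrt.PosSemidef := by
  unfold Matrix.PosSemidef.sqrt
  exact (posSemidef_diagonal_iff.mpr fun i => by
    simpa using Real.sqrt_nonneg _).mul_mul_conjTranspose_same _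
end sqrtlemmas

section helpers
variable {k : ℕ}

lemma conj_mul_conj (U : Matrix (Fin k) (Fin k) ℝ) (hU : star U * U = 1)
    (X Y : Matrix (Fin k) (Fin k) ℝ) :
    (U * X * star U) * (U * Y * star U) = U * (X * Y) * star U := by
  simp only [mul_assoc]
  rw [← mul_assoc (star U) U, hU, one_mul]

lemma trace_conj (U : Matrix (Fin k) (Fin k) ℝ) (hU : star U * U = 1)
    (X : Matrix (Fin k) (Fin k) ℝ) :
    trace (U * X * star U) = trace X := by
  rw [trace_mul_cycle, hU, one_mul]

lemma conj_add (U : Matrix (Fin k) (Fin k) ℝ) (v w : Fin k → ℝ) :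
    U * diagonal v * star U + U * diagonal w * star U = U * diagonal (v + w) * star U := by
  have hd : diagonal (v + w) = diagonal v + diagonal w := (diagonal_add v w).symm
  rw [hd, mul_add, add_mul]

lemma trace_conj_inv (R : Matrix (Fin k) (Fin k) ℝ) [Invertible R]
    (X : Matrix (Fin k) (Fin k) ℝ) :
    trace (R * X * R⁻¹) = trace X := by
  rw [trace_mul_cycle, Matrix.inv_mul_of_invertible, one_mul]

lemma frobSq_symm_conj (P C : Matrix (Fin k) (Fin k) ℝ) (hP : Pᵀ = P) (hC : Cᵀ = C) :
    frobSq (P * C * P) = trace (C * (P * P) * (C * (P * P))) := by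
  unfold frobSq
  have ht : (P * C * P)ᵀ = P * C * P := by
    rw [transpose_mul, transpose_mul, hP, hC, mul_assoc]
  rw [ht, show (P*C*P)*(P*C*P) = P * (C*(P*P)*(C*P)) by simp only [mul_assoc],
    trace_mul_comm]
  simp only [mul_assoc]

/-- The key scalar inequality. -/
lemma scalar_bounds (d : Fin k → ℝ) (a b : ℝ)
    (hA : a = Real.sqrt (∑ i, d i * d i))
    (hB : b = Real.sqrt (∑ i, (d i * (1 + d i)⁻¹) * (d i * (1 + d i)⁻¹)))
    (ha : a < 1) : a / (1 + a) ≤ b ∧ b ≤ a / (1 - a) := by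
  have hsumnn : 0 ≤ ∑ i, d i * d i :=
    Finset.sum_nonneg fun i _ => mul_self_nonneg _
  have ha0 : 0 ≤ a := hA ▸ Real.sqrt_nonneg _
  have hsum : ∑ i, d i * d i = a ^ 2 := by
    rw [hA, Real.sq_sqrt hsumnn]
  have hdle : ∀ i, |d i| ≤ a := by
    intro i
    rw [← Real.sqrt_mul_self_eq_abs, hA]
    exact Real.sqrt_le_sqrt (Finset.single_le_sum (fun j _ => mul_self_nonneg (d j))
      (Finset.mem_univ i))
  have hlo : ∀ i, 1 - a ≤ 1 + d i := fun i => by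
    have := (abs_le.mp (hdle i)).1; linarith
  have hhi : ∀ i, 1 + d i ≤ 1 + a := fun i => by
    have := (abs_le.mp (hdle i)).2; linarith
  have h1a : (0:ℝ) < 1 - a := by linarith
  have h1a' : (0:ℝ) < 1 + a := by linarith
  have hposi : ∀ i, (0:ℝ) < 1 + d i := fun i => lt_of_lt_of_le h1a (hlo i)
  constructor
  · -- a / (1+a) ≤ b
    have hterm : ∀ i ∈ Finset.univ, d i * d i * ((1+a)⁻¹ * (1+a)⁻¹)
        ≤ (d i * (1 + d i)⁻¹) * (d i * (1 + d i)⁻¹) := by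
      intro i _
      rw [mul_mul_mul_comm (d i) ((1 + d i)⁻¹)]
      refine mul_le_mul_of_nonneg_left (mul_self_le_mul_self (by positivity) ?_)
        (mul_self_nonneg _)
      exact inv_anti₀ (hposi i) (hhi i)
    have hsle : a^2 * ((1+a)⁻¹ * (1+a)⁻¹)
        ≤ ∑ i, (d i * (1 + d i)⁻¹) * (d i * (1 + d i)⁻¹) := by
      calc a^2 * ((1+a)⁻¹ * (1+a)⁻¹) = ∑ i, d i * d i * ((1+a)⁻¹ * (1+a)⁻¹) := by
            rw [← Finset.sum_mul, hsum]
        _ ≤ _ := Finset.sum_le_sum hterm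
    have : a / (1 + a) = Real.sqrt (a^2 * ((1+a)⁻¹ * (1+a)⁻¹)) := by
      rw [show a^2 * ((1+a)⁻¹ * (1+a)⁻¹) = (a * (1+a)⁻¹)^2 by ring,
        Real.sqrt_sq (by positivity), div_eq_mul_inv]
    rw [this, hB]
    exact Real.sqrt_le_sqrt hsle
  · -- b ≤ a / (1-a)
    have hterm : ∀ i ∈ Finset.univ, (d i * (1 + d i)⁻¹) * (d i * (1 + d i)⁻¹)
        ≤ d i * d i * ((1-a)⁻¹ * (1-a)⁻¹) := by
      intro i _
      rw [mul_mul_mul_comm (d i) ((1 + d i)⁻¹)]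
      refine mul_le_mul_of_nonneg_left (mul_self_le_mul_self (inv_nonneg.mpr (hposi i).le) ?_)
        (mul_self_nonneg _)
      exact inv_anti₀ h1a (hlo i)
    have hsle : ∑ i, (d i * (1 + d i)⁻¹) * (d i * (1 + d i)⁻¹)
        ≤ a^2 * ((1-a)⁻¹ * (1-a)⁻¹) := by
      calc ∑ i, (d i * (1 + d i)⁻¹) * (d i * (1 + d i)⁻¹)
          ≤ ∑ i, d i * d i * ((1-a)⁻¹ * (1-a)⁻¹) := Finset.sum_le_sum hterm
        _ = a^2 * ((1-a)⁻¹ * (1-a)⁻¹) := by rw [← Finset.sum_mul, hsum]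
    have : a / (1 - a) = Real.sqrt (a^2 * ((1-a)⁻¹ * (1-a)⁻¹)) := by
      rw [show a^2 * ((1-a)⁻¹ * (1-a)⁻¹) = (a * (1-a)⁻¹)^2 by ring,
        Real.sqrt_sq (by positivity), div_eq_mul_inv]
    rw [hB, this]
    exact Real.sqrt_le_sqrt hsle

end helpers

/-- With `a = ‖S*^{-1/2}(S−S*)S*^{-1/2}‖_F` and `b = ‖S^{-1/2}(S*−S)S^{-1/2}‖_F`,
if `a < 1` then `a/(1+a) ≤ b ≤ a/(1−a)`. -/
theorem frob_ratio_bounds {m : ℕ}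
    (S Sstar : Matrix (Fin m) (Fin m) ℝ)
    (hS : S.PosDef) (hSstar : Sstar.PosDef)
    (ha : frob (hSstar.posSemidef.sqrt⁻¹ * (S - Sstar) * hSstar.posSemidef.sqrt⁻¹) < 1) :
    frob (hSstar.posSemidef.sqrt⁻¹ * (S - Sstar) * hSstar.posSemidef.sqrt⁻¹)
        / (1 + frob (hSstar.posSemidef.sqrt⁻¹ * (S - Sstar) * hSstar.posSemidef.sqrt⁻¹))
      ≤ frob (hS.posSemidef.sqrt⁻¹ * (Sstar - S) * hS.posSemidef.sqrt⁻¹) ∧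
    frob (hS.posSemidef.sqrt⁻¹ * (Sstar - S) * hS.posSemidef.sqrt⁻¹)
      ≤ frob (hSstar.posSemidef.sqrt⁻¹ * (S - Sstar) * hSstar.posSemidef.sqrt⁻¹)
          / (1 - frob (hSstar.posSemidef.sqrt⁻¹ * (S - Sstar) * hSstar.posSemidef.sqrt⁻¹)) := by
  classical
  set R := hSstar.posSemidef.sqrt with hRdef
  set Q := hS.posSemidef.sqrt with hQdef
  have hRR : R * R = Sstar := hSstar.posSemidef.sqrt_mul_self
  have hQQ : Q * Q = S := hS.posSemidef.sqrt_mul_self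
  have hRsymm : Rᵀ = R := by
    have h : Rᴴ = R := hSstar.posSemidef.posSemidef_sqrt.1
    rwa [conjTranspose_eq_transpose_of_trivial] at h
  have hQsymm : Qᵀ = Q := by
    have h : Qᴴ = Q := hS.posSemidef.posSemidef_sqrt.1
    rwa [conjTranspose_eq_transpose_of_trivial] at h
  have hSsymm : Sᵀ = S := by
    have h : Sᴴ = S := hS.1
    rwa [conjTranspose_eq_transpose_of_trivial] at h
  have hSstarsymm : Sstarᵀ = Sstar := by
    have h : Sstarᴴ = Sstar := hSstar.1
    rwa [conjTranspose_eq_transpose_of_trivial] at h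
  -- invertibility of the square roots
  haveI : Invertible R := by
    refine R.invertibleOfIsUnitDet ?_
    have h : R.det * R.det = Sstar.det := by rw [← det_mul, hRR]
    have h2 := hSstar.det_pos
    exact (show R.det ≠ 0 by intro h0; rw [h0, mul_zero] at h; exact h2.ne h).isUnit
  haveI : Invertible Q := by
    refine Q.invertibleOfIsUnitDet ?_
    have h : Q.det * Q.det = S.det := by rw [← det_mul, hQQ]
    have h2 := hS.det_pos
    exact (show Q.det ≠ 0 by intro h0; rw [h0, mul_zero] at h; exact h2.ne h).isUnit
  have hRinvsymm : (R⁻¹)ᵀ = R⁻¹ := by rw [transpose_nonsing_inv, hRsymm]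
  have hQinvsymm : (Q⁻¹)ᵀ = Q⁻¹ := by rw [transpose_nonsing_inv, hQsymm]
  set Δ := R⁻¹ * (S - Sstar) * R⁻¹ with hΔdef
  set E := Q⁻¹ * (Sstar - S) * Q⁻¹ with hEdef
  have hCsymm : (S - Sstar)ᵀ = S - Sstar := by rw [transpose_sub, hSsymm, hSstarsymm]
  have hC'symm : (Sstar - S)ᵀ = Sstar - S := by rw [transpose_sub, hSsymm, hSstarsymm]
  have hΔsymm : Δᵀ = Δ := by
    rw [hΔdef, transpose_mul, transpose_mul, hRinvsymm, hCsymm, mul_assoc]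
  have hEsymm : Eᵀ = E := by
    rw [hEdef, transpose_mul, transpose_mul, hQinvsymm, hC'symm, mul_assoc]
  have hΔherm : Δ.IsHermitian := by
    show Δᴴ = Δ
    rw [conjTranspose_eq_transpose_of_trivial, hΔsymm]
  -- spectral decomposition of Δ
  set U : Matrix (Fin m) (Fin m) ℝ :=
    (hΔherm.eigenvectorUnitary : Matrix (Fin m) (Fin m) ℝ) with hUdef
  set d := hΔherm.eigenvalues with hddef
  have hU2 : star U * U = 1 := (Unitary.mem_iff.mp (hΔherm.eigenvectorUnitary).2).1
  have hU1 : U * star U = 1 := (Unitary.mem_iff.mp (hΔherm.eigenvectorUnitary).2).2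
  have hspec : Δ = U * diagonal d * star U := by
    have h := hΔherm.spectral_theorem
    rw [Unitary.conjStarAlgAut_apply] at h
    have h2 : (RCLike.ofReal ∘ d : Fin m → ℝ) = d := by ext i; simp
    rwa [h2] at h
  -- frobSq Δ = ∑ dᵢ²
  have hfa : frobSq Δ = ∑ i, d i * d i := by
    unfold frobSq
    rw [hΔsymm, hspec, conj_mul_conj U hU2, diagonal_mul_diagonal,
      trace_conj U hU2, trace_diagonal]
  -- eigenvalue bounds
  have hfrobΔ : frob Δ = Real.sqrt (∑ i, d i * d i) := by rw [frob, hfa]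
  have hdle : ∀ i, |d i| ≤ frob Δ := by
    intro i
    rw [hfrobΔ, ← Real.sqrt_mul_self_eq_abs]
    exact Real.sqrt_le_sqrt (Finset.single_le_sum (fun j _ => mul_self_nonneg (d j))
      (Finset.mem_univ i))
  have hne : ∀ i, (1 : ℝ) + d i ≠ 0 := by
    intro i
    have h1 := (abs_le.mp (hdle i)).1
    have : (0:ℝ) < 1 + d i := by linarith
    exact this.ne'
  -- inverse of 1 + Δ
  have hNrep : (1 + Δ)⁻¹ = U * diagonal (fun i => (1 + d i)⁻¹) * star U := by
    apply inv_eq_right_inv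
    have hone : (1 : Matrix (Fin m) (Fin m) ℝ) = U * diagonal (fun _ => (1:ℝ)) * star U := by
      rw [diagonal_one, mul_one, hU1]
    have hsum : (1 : Matrix (Fin m) (Fin m) ℝ) + Δ
        = U * diagonal (fun i => (1:ℝ) + d i) * star U := by
      rw [hspec]
      conv_lhs => rw [hone]
      rw [conj_add U (fun _ => (1:ℝ)) d]
      rfl
    rw [hsum, conj_mul_conj U hU2, diagonal_mul_diagonal]
    have : (fun i => ((1:ℝ) + d i) * (1 + d i)⁻¹) = fun _ => (1:ℝ) :=
      funext fun i => mul_inv_cancel₀ (hne i)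
    rw [this, diagonal_one, mul_one, hU1]
  -- structural identities
  have hC : S - Sstar = R * Δ * R := by
    rw [hΔdef]
    simp only [mul_assoc, Matrix.mul_inv_cancel_left_of_invertible,
      Matrix.inv_mul_cancel_left_of_invertible, Matrix.inv_mul_of_invertible,
      Matrix.mul_inv_of_invertible, mul_one, one_mul]
  have hSrep : S = R * (1 + Δ) * R := by
    have h : R * (1 + Δ) * R = R * R + R * Δ * R := by noncomm_ring
    rw [h, hRR, ← hC]
    abel
  have hSinv : S⁻¹ = R⁻¹ * (1 + Δ)⁻¹ * R⁻¹ := by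
    rw [hSrep, Matrix.mul_inv_rev, Matrix.mul_inv_rev, mul_assoc]
  -- frobSq E computation
  have hbE : frobSq E = trace ((Sstar - S) * S⁻¹ * ((Sstar - S) * S⁻¹)) := by
    rw [hEdef, frobSq_symm_conj Q⁻¹ (Sstar - S) hQinvsymm hC'symm,
      show Q⁻¹ * Q⁻¹ = S⁻¹ by rw [← Matrix.mul_inv_rev, hQQ]]
  have hCneg : Sstar - S = -(R * Δ * R) := by rw [← hC, neg_sub]
  have key : (Sstar - S) * S⁻¹ * ((Sstar - S) * S⁻¹)
      = R * ((Δ * (1 + Δ)⁻¹) * (Δ * (1 + Δ)⁻¹)) * R⁻¹ := by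
    rw [hCneg, hSinv]
    simp only [neg_mul, mul_neg, neg_neg]
    simp only [mul_assoc, Matrix.mul_inv_cancel_left_of_invertible,
      Matrix.inv_mul_cancel_left_of_invertible]
  have hfb : frobSq E = ∑ i, (d i * (1 + d i)⁻¹) * (d i * (1 + d i)⁻¹) := by
    rw [hbE, key, trace_conj_inv, hNrep, hspec,
      conj_mul_conj U hU2, conj_mul_conj U hU2, trace_conj U hU2,
      diagonal_mul_diagonal, diagonal_mul_diagonal, trace_diagonal]
  exact scalar_bounds d (frob Δ) (frob E) (by rw [frob, hfa]) (by rw [frob, hfb]) ha
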